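/- Let A = {u_i ⊗ v_i ⊗ w_i : i = 1,…,r} be an algorithm computing ⟨m,n,p⟩. Then the set {u_i} has the D-property if and only if there exist a ∈ GL_m(ℂ) and b ∈ GL_n(ℂ) such that every matrix unit e_{ij} (1 ≤ i ≤ m, 1 ≤ j ≤ n) lies in the set {a u_i b⁻¹ : i = 1,…,r}. -/

import Mathlib

open TensorProduct Kronecker Matrix

/-- The matrix multiplication tensor `⟨m,n,p⟩`. -/
noncomputable def MMT (m n p : ℕ) :
    Matrix (Fin m) (Fin n) ℂ ⊗[ℂ] (Matrix (Fin n) (Fin p) ℂ ⊗[ℂ] Matrix (Fin p) (Fin m) ℂ) :=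
  ∑ i : Fin m, ∑ j : Fin n, ∑ k : Fin p,
    Matrix.single i j (1 : ℂ) ⊗ₜ[ℂ]
      (Matrix.single j k (1 : ℂ) ⊗ₜ[ℂ] Matrix.single k i (1 : ℂ))

/-- The matrix `U_{mn} ∈ ℂ^{mn×mn}` whose `q`-th column is the row-wise vectorization
`R(u_{s q})` of the selected matrix `u_{s q}` (rows and columns indexed row-major by
`Fin m × Fin n`). -/
def colMatrix {m n r : ℕ} (u : Fin r → Matrix (Fin m) (Fin n) ℂ)
    (s : Fin m × Fin n → Fin r) : Matrix (Fin m × Fin n) (Fin m × Fin n) ℂ :=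
  Matrix.of fun q q' => u (s q') q.1 q.2

/-- The set `{u_i}` has the *D-property*: for some choice of `mn` of the `u_i` whose
vectorizations form an invertible matrix `U_{mn}` (a maximal linearly independent
subset), `U_{mn} = U_m ⊗ U_n` is a Kronecker product of invertible matrices. -/
def DProp {m n r : ℕ} (u : Fin r → Matrix (Fin m) (Fin n) ℂ) : Prop :=
  ∃ (s : Fin m × Fin n → Fin r) (Um : Matrix (Fin m) (Fin m) ℂ)
    (Un : Matrix (Fin n) (Fin n) ℂ),
      IsUnit Um ∧ IsUnit Un ∧ colMatrix u s = Um ⊗ₖ Un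

private lemma mul_std_mul {m n : ℕ} (A : Matrix (Fin m) (Fin m) ℂ)
    (B : Matrix (Fin n) (Fin n) ℂ) (i x : Fin m) (j y : Fin n) :
    (A * Matrix.single i j (1 : ℂ) * B) x y = A x i * B j y := by
  have : A * Matrix.single i j (1 : ℂ) * B
      = Matrix.of fun x y => A x i * B j y := by
    ext x y
    simp [Matrix.mul_apply, Matrix.single, Finset.mul_sum, ite_and,
      Finset.sum_ite_eq, Finset.sum_ite_eq']
  rw [this]
  rfl

private lemma sandwich {m n : ℕ} (A : Matrix (Fin m) (Fin m) ℂ)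
    (B : Matrix (Fin n) (Fin n) ℂ) (E : Matrix (Fin m) (Fin n) ℂ)
    (hA : IsUnit A) (hB : IsUnit B) : A⁻¹ * (A * E * B) * B⁻¹ = E := by
  rw [show A⁻¹ * (A * E * B) * B⁻¹ = (A⁻¹ * A) * E * (B * B⁻¹) by
      simp only [Matrix.mul_assoc],
    Matrix.nonsing_inv_mul _ ((Matrix.isUnit_iff_isUnit_det _).mp hA),
    Matrix.mul_nonsing_inv _ ((Matrix.isUnit_iff_isUnit_det _).mp hB),
    Matrix.one_mul, Matrix.mul_one]

/-- Let `A = {u_i ⊗ v_i ⊗ w_i}` be an algorithm computing `⟨m,n,p⟩`.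
Then `{u_i}` has the D-property if and only if there exist `a ∈ GL_m(ℂ)`,
`b ∈ GL_n(ℂ)` with all matrix units `e_{ij}` contained in `{a u_i b⁻¹}`. -/
theorem dProp_iff_units (m n p r : ℕ)
    (u : Fin r → Matrix (Fin m) (Fin n) ℂ)
    (v : Fin r → Matrix (Fin n) (Fin p) ℂ)
    (w : Fin r → Matrix (Fin p) (Fin m) ℂ)
    (h : MMT m n p = ∑ i : Fin r, u i ⊗ₜ[ℂ] (v i ⊗ₜ[ℂ] w i)) :
    DProp u ↔ ∃ (a : Matrix (Fin m) (Fin m) ℂ) (b : Matrix (Fin n) (Fin n) ℂ),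
      IsUnit a ∧ IsUnit b ∧
      ∀ (i : Fin m) (j : Fin n), ∃ k : Fin r,
        a * u k * b⁻¹ = Matrix.single i j (1 : ℂ) := by
  constructor
  · rintro ⟨s, Um, Un, hUm, hUn, hcol⟩
    -- u (s (i,j)) = Um * E_{ij} * Unᵀ
    have key : ∀ (i : Fin m) (j : Fin n),
        u (s (i, j)) = Um * Matrix.single i j (1 : ℂ) * Unᵀ := by
      intro i j
      ext x y
      have := congrFun (congrFun hcol (x, y)) (i, j)
      simp only [colMatrix, Matrix.of_apply, Matrix.kroneckerMap_apply] at this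
      rw [this, mul_std_mul]
      rfl
    refine ⟨Um⁻¹, Unᵀ, Matrix.isUnit_nonsing_inv_iff.mpr hUm, Matrix.isUnit_transpose _ |>.mpr hUn, fun i j => ⟨s (i, j), ?_⟩⟩
    rw [key]
    exact sandwich Um Unᵀ _ hUm ((Matrix.isUnit_transpose _).mpr hUn)
  · rintro ⟨a, b, ha, hb, hk⟩
    choose s hs using fun q : Fin m × Fin n => hk q.1 q.2
    refine ⟨s, a⁻¹, bᵀ, Matrix.isUnit_nonsing_inv_iff.mpr ha, Matrix.isUnit_transpose _ |>.mpr hb, ?_⟩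
    have key : ∀ q : Fin m × Fin n,
        u (s q) = a⁻¹ * Matrix.single q.1 q.2 (1 : ℂ) * b := by
      intro q
      have h1 := hs q
      have : a⁻¹ * (a * u (s q) * b⁻¹) * b
          = a⁻¹ * Matrix.single q.1 q.2 (1 : ℂ) * b := by rw [h1]
      rw [show a⁻¹ * (a * u (s q) * b⁻¹) * b
          = (a⁻¹ * a) * u (s q) * (b⁻¹ * b) by simp only [Matrix.mul_assoc],
        Matrix.nonsing_inv_mul _ (Matrix.isUnit_iff_isUnit_det _ |>.mp ha),
        Matrix.nonsing_inv_mul _ (Matrix.isUnit_iff_isUnit_det _ |>.mp hb)] at this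
      simpa using this
    ext q q'
    simp only [colMatrix, Matrix.of_apply, Matrix.kroneckerMap_apply, key]
    rw [mul_std_mul]
    rfl
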